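/- Let p ≥ 1 be an integer, set θ = π/(2p+1), and define α = (1/4)·(1 + i·sin(θ)/(1 + cos(θ))). Then Arg(α) − Arg(conj(α)) = π/(2p+1); consequently, the pair (z_1, z_2) = (α, conj(α)) consists of nonzero complex numbers with nonnegative real parts satisfying z_1^{2p+1} + z_2^{2p+1} = 0, for which max(Arg z_1, Arg z_2) − min(Arg z_1, Arg z_2) equals exactly π/(2p+1). -/

import Mathlib

lemma stmt_12_aux (c s : ℝ) (hc : 0 < c) :
    ((1 / 4 : ℂ) * (1 + Complex.I * ((s / c : ℝ) : ℂ))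
      = ((1 / (4 * c) : ℝ) : ℂ) * ((c : ℂ) + (s : ℂ) * Complex.I)) ∧
    ((((1 / (4 * c) : ℝ) : ℂ) * ((c : ℂ) + (s : ℂ) * Complex.I)).re = 1 / 4) := by
  have hc' : (c : ℂ) ≠ 0 := by exact_mod_cast hc.ne'
  constructor
  · push_cast
    field_simp
  · simp [Complex.mul_re]
    field_simp

theorem stmt_12 (p : ℕ) (hp : 1 ≤ p)
    (α : ℂ)
    (hα : α = (1 / 4 : ℂ) * (1 + Complex.I *
      ((Real.sin (Real.pi / (2 * p + 1)) / (1 + Real.cos (Real.pi / (2 * p + 1)))) : ℝ))) :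
    α.arg - ((starRingEnd ℂ) α).arg = Real.pi / (2 * p + 1) ∧
    α ≠ 0 ∧ (starRingEnd ℂ) α ≠ 0 ∧
    0 ≤ α.re ∧ 0 ≤ ((starRingEnd ℂ) α).re ∧
    α ^ (2 * p + 1) + ((starRingEnd ℂ) α) ^ (2 * p + 1) = 0 ∧
    max α.arg ((starRingEnd ℂ) α).arg - min α.arg ((starRingEnd ℂ) α).arg
      = Real.pi / (2 * p + 1) := by
  have hN3 : (3:ℝ) ≤ 2 * (p:ℝ) + 1 := by
    have : (1:ℝ) ≤ (p:ℝ) := by exact_mod_cast hp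
    linarith
  have hNpos : (0:ℝ) < 2 * (p:ℝ) + 1 := by linarith
  set θ : ℝ := Real.pi / (2 * (p:ℝ) + 1) with hθdef
  have hθpos : 0 < θ := div_pos Real.pi_pos hNpos
  have hθle : θ ≤ Real.pi / 3 := by
    apply div_le_div_of_nonneg_left Real.pi_pos.le (by norm_num) hN3
  set t : ℝ := θ / 2 with htdef
  have htpos : 0 < t := by positivity
  have htlt : t < Real.pi / 2 := by
    have := Real.pi_pos
    calc t ≤ Real.pi / 6 := by rw [htdef]; linarith
    _ < Real.pi / 2 := by linarith
  have hcos : 0 < Real.cos t := Real.cos_pos_of_mem_Ioo ⟨by linarith [Real.pi_pos], htlt⟩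
  have hθ2 : θ = 2 * t := by rw [htdef]; ring
  have hrat : Real.sin θ / (1 + Real.cos θ) = Real.sin t / Real.cos t := by
    rw [hθ2, Real.sin_two_mul, Real.cos_two_mul]
    rw [show 1 + (2 * Real.cos t ^ 2 - 1) = 2 * Real.cos t ^ 2 by ring]
    field_simp
  have hcC : (Real.cos t : ℂ) ≠ 0 := by exact_mod_cast hcos.ne'
  have hα' : α = ((1 / (4 * Real.cos t) : ℝ) : ℂ) *
      ((Real.cos t : ℂ) + (Real.sin t : ℂ) * Complex.I) := by
    rw [hα, hrat]
    exact (stmt_12_aux _ _ hcos).1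
  have hα'' : α = ((1 / (4 * Real.cos t) : ℝ) : ℂ) *
      (Complex.cos (t : ℂ) + Complex.sin (t : ℂ) * Complex.I) := by
    rw [hα', Complex.ofReal_cos, Complex.ofReal_sin]
  have hr : (0:ℝ) < 1 / (4 * Real.cos t) := by positivity
  have harg : α.arg = t := by
    rw [hα'']
    exact Complex.arg_mul_cos_add_sin_mul_I hr
      (Set.mem_Ioc.mpr ⟨by linarith [Real.pi_pos], by linarith [Real.pi_pos]⟩)
  have hargne : α.arg ≠ Real.pi := by rw [harg]; intro h; linarith [Real.pi_pos]
  have hargconj : ((starRingEnd ℂ) α).arg = -t := by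
    rw [Complex.arg_conj, if_neg hargne, harg]
  have hre : α.re = 1 / 4 := by
    rw [hα']
    exact (stmt_12_aux _ _ hcos).2
  have hne : α ≠ 0 := fun h => by rw [h] at hre; norm_num at hre
  have hnec : (starRingEnd ℂ) α ≠ 0 := by
    intro h
    apply hne
    have := congrArg (starRingEnd ℂ) h
    simpa using this
  have hexp : α = ((1 / (4 * Real.cos t) : ℝ) : ℂ) * Complex.exp (t * Complex.I) := by
    rw [hα'', Complex.exp_mul_I]
  have hpow : α ^ (2 * p + 1) =
      ((1 / (4 * Real.cos t) : ℝ) : ℂ) ^ (2 * p + 1) * Complex.I := by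
    rw [hexp, mul_pow, ← Complex.exp_nat_mul]
    congr 1
    have hreal : (2 * (p:ℝ) + 1) * t = Real.pi / 2 := by
      rw [htdef, hθdef]; field_simp
    have hnt : ((2 * p + 1 : ℕ) : ℂ) * (t : ℂ) = ((Real.pi / 2 : ℝ) : ℂ) := by
      push_cast
      have h2 := congrArg (Complex.ofReal) hreal; push_cast at h2; linear_combination h2
    rw [← mul_assoc, hnt, Complex.exp_mul_I, ← Complex.ofReal_cos, ← Complex.ofReal_sin,
      Real.cos_pi_div_two, Real.sin_pi_div_two]
    simp
  have hsum : α ^ (2 * p + 1) + ((starRingEnd ℂ) α) ^ (2 * p + 1) = 0 := by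
    rw [← map_pow, hpow, map_mul, ← Complex.ofReal_pow, Complex.conj_ofReal, Complex.conj_I,
      Complex.ofReal_pow]
    ring
  refine ⟨?_, hne, hnec, by rw [hre]; norm_num, ?_, hsum, ?_⟩
  · rw [harg, hargconj, hθ2]; ring
  · have : ((starRingEnd ℂ) α).re = α.re := Complex.conj_re α
    rw [this, hre]; norm_num
  · rw [harg, hargconj, max_eq_left (by linarith), min_eq_right (by linarith), hθ2]; ring
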